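/- (Lemma 4.5) Let ρ be a face of ℕA and let α ∈ ℕρ be such that α ∉ ℕσ for every face σ of ℕA with σ ⊊ ρ (i.e., α lies on no proper face of ρ). Let β ∈ ℤ^d and let μ be a face of ℕA. If there exists M ∈ ℕ such that β − m·α ∈ ℕA + ℤμ for all integers m ≥ M, then ρ ⊆ μ. -/

import Mathlib

/-- The semigroup `ℕA`: the additive submonoid of `ℤ^d` generated by the
columns `a 1, …, a n` of the matrix `A`. -/
def semigroupNA (d n : ℕ) (a : Fin n → (Fin d → ℤ)) : AddSubmonoid (Fin d → ℤ) :=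
  AddSubmonoid.closure (Set.range a)

/-- The submonoid `ℕτ` of `ℤ^d` generated by the columns `a i` for `i ∈ τ`. -/
def monoidNface (d n : ℕ) (a : Fin n → (Fin d → ℤ)) (τ : Set (Fin n)) :
    AddSubmonoid (Fin d → ℤ) :=
  AddSubmonoid.closure (a '' τ)

/-- The subgroup `ℤτ` of `ℤ^d` generated by the columns `a i` for `i ∈ τ`. -/
def groupZface (d n : ℕ) (a : Fin n → (Fin d → ℤ)) (τ : Set (Fin n)) :
    AddSubgroup (Fin d → ℤ) :=
  AddSubgroup.closure (a '' τ)

/-- The set `ℕA + ℤτ = {u + v : u ∈ ℕA, v ∈ ℤτ}`. -/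
def NAplusZ (d n : ℕ) (a : Fin n → (Fin d → ℤ)) (τ : Set (Fin n)) :
    Set (Fin d → ℤ) :=
  {x | ∃ u ∈ semigroupNA d n a, ∃ v ∈ groupZface d n a τ, x = u + v}

/-- `τ ⊆ {1,…,n}` is a face of `ℕA` if there is a `ℤ`-linear functional `f` on `ℤ^d`
that is nonnegative on all columns of `A` and `τ = {i : f (a i) = 0}`. -/
def IsFace (d n : ℕ) (a : Fin n → (Fin d → ℤ)) (τ : Set (Fin n)) : Prop :=
  ∃ f : (Fin d → ℤ) →ₗ[ℤ] ℤ, (∀ i, 0 ≤ f (a i)) ∧ τ = {i | f (a i) = 0}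

/-- Lemma 4.5: if `α ∈ ℕρ` lies on no proper face of the face `ρ`,
and `β - m • α ∈ ℕA + ℤμ` for all sufficiently large integers `m`, then `ρ ⊆ μ`. -/
theorem face_subset_of_eventually_mem
    (d n : ℕ) (hd : 0 < d) (hn : 0 < n) (a : Fin n → (Fin d → ℤ))
    (ρ : Set (Fin n)) (hρ : IsFace d n a ρ)
    (α : Fin d → ℤ) (hα : α ∈ monoidNface d n a ρ)
    (hint : ∀ σ : Set (Fin n), IsFace d n a σ → σ ⊂ ρ → α ∉ monoidNface d n a σ)
    (β : Fin d → ℤ) (μ : Set (Fin n)) (hμ : IsFace d n a μ)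
    (h : ∃ M : ℕ, ∀ m : ℤ, (M : ℤ) ≤ m → β - m • α ∈ NAplusZ d n a μ) :
    ρ ⊆ μ := by
  obtain ⟨f, hf0, hfμ⟩ := hμ
  obtain ⟨g, hg0, hgρ⟩ := hρ
  obtain ⟨M, hM⟩ := h
  -- f is nonnegative on ℕA
  have hfNA : ∀ x ∈ semigroupNA d n a, 0 ≤ f x := by
    intro x hx
    induction hx using AddSubmonoid.closure_induction with
    | mem y hy => obtain ⟨i, rfl⟩ := hy; exact hf0 i
    | zero => simp
    | add x y _ _ hx hy => rw [map_add]; omega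
  -- f vanishes on ℤμ
  have hfZμ : ∀ x ∈ groupZface d n a μ, f x = 0 := by
    intro x hx
    induction hx using AddSubgroup.closure_induction with
    | mem y hy =>
      obtain ⟨i, hi, rfl⟩ := hy
      have := hfμ ▸ hi
      exact this
    | zero => simp
    | add x y _ _ hx hy => rw [map_add, hx, hy]; ring
    | neg x _ hx => rw [map_neg, hx]; ring
  -- f α ≥ 0, and f α = 0 with witnesses in ρ ∩ μ
  have key : ∀ x ∈ monoidNface d n a ρ,
      0 ≤ f x ∧ (f x = 0 → x ∈ monoidNface d n a (ρ ∩ μ)) := by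
    intro x hx
    induction hx using AddSubmonoid.closure_induction with
    | mem y hy =>
      obtain ⟨i, hi, rfl⟩ := hy
      refine ⟨hf0 i, fun hz => ?_⟩
      exact AddSubmonoid.subset_closure ⟨i, ⟨hi, hfμ ▸ hz⟩, rfl⟩
    | zero =>
      refine ⟨by simp, fun _ => ?_⟩
      exact zero_mem _
    | add x y _ _ hx hy =>
      rw [map_add]
      refine ⟨by omega, fun hz => ?_⟩
      have hx0 : f x = 0 := by omega
      have hy0 : f y = 0 := by omega
      exact add_mem (hx.2 hx0) (hy.2 hy0)
  have hfα : 0 ≤ f α := (key α hα).1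
  -- f α = 0
  have hfα0 : f α = 0 := by
    by_contra hne
    have hpos : 1 ≤ f α := by omega
    set m : ℤ := max (M : ℤ) (f β) + 1 with hm
    have hmM : (M : ℤ) ≤ m := by
      have := le_max_left (M : ℤ) (f β); omega
    have hmβ : f β < m := by
      have := le_max_right (M : ℤ) (f β); omega
    obtain ⟨u, hu, v, hv, huv⟩ := hM m hmM
    have hβ : f β - m * f α = f u := by
      have := congrArg f huv
      rw [map_sub, map_zsmul, map_add, hfZμ v hv] at this
      simpa [smul_eq_mul] using this
    have hu0 : 0 ≤ f u := hfNA u hu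
    have hm0 : 0 < m := by positivity
    nlinarith
  -- ρ ∩ μ is a face via f + g
  have hface : IsFace d n a (ρ ∩ μ) := by
    refine ⟨f + g, fun i => ?_, ?_⟩
    · have := hf0 i; have := hg0 i; simp only [LinearMap.add_apply]; omega
    · ext i
      have hfi := hf0 i
      have hgi := hg0 i
      simp only [Set.mem_inter_iff, hgρ, hfμ, Set.mem_setOf_eq, LinearMap.add_apply]
      omega
  have hmem : α ∈ monoidNface d n a (ρ ∩ μ) := (key α hα).2 hfα0
  -- conclude
  by_contra hns
  have hsub : ρ ∩ μ ⊂ ρ := by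
    constructor
    · exact Set.inter_subset_left
    · intro hle
      exact hns (fun i hi => (hle hi).2)
  exact hint (ρ ∩ μ) hface hsub hmem
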